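/- Every Dedekind-finite weakly l.f.g.u. monoid H is factorable (every ∣_H-non-unit is a non-empty product of irreducibles of the premonoid (H, ∣_H)). If, in addition, every irreducible of (H, ∣_H) is an ordinary atom of H (a non-unit that is not a product of two non-units), then H is FmF-atomic. -/

import Mathlib

open Pointwise

namespace FactPaper

/-- `u` is a `≼`-unit for the preorder-like relation `r` on a monoid. -/
def RUnit {M : Type*} [Monoid M] (r : M → M → Prop) (u : M) : Prop :=
  r u 1 ∧ r 1 u

/-- `u` is a `≼`-non-unit. -/
def RNonUnit {M : Type*} [Monoid M] (r : M → M → Prop) (u : M) : Prop :=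
  ¬ RUnit r u

/-- The strict part `≺` of the relation `r`. -/
def RLt {M : Type*} (r : M → M → Prop) (x y : M) : Prop :=
  r x y ∧ ¬ r y x

/-- `a` is a `≼`-irreducible. -/
def RIrred {M : Type*} [Monoid M] (r : M → M → Prop) (a : M) : Prop :=
  RNonUnit r a ∧
    ∀ y z : M, RNonUnit r y → RNonUnit r z → RLt r y a → RLt r z a → a ≠ y * z

/-- `a` is a `≼`-atom. -/
def RAtom {M : Type*} [Monoid M] (r : M → M → Prop) (a : M) : Prop :=
  RNonUnit r a ∧ ∀ y z : M, RNonUnit r y → RNonUnit r z → a ≠ y * z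

/-- `a` is a `≼`-quark. -/
def RQuark {M : Type*} [Monoid M] (r : M → M → Prop) (a : M) : Prop :=
  RNonUnit r a ∧ ¬ ∃ b : M, RNonUnit r b ∧ RLt r b a

/-- The divisibility preorder: `Dvd2 x y` iff `y ∈ M x M`. -/
def Dvd2 {M : Type*} [Monoid M] (x y : M) : Prop :=
  ∃ u v : M, y = u * x * v

/-- The restriction of a relation on `M` to a submonoid `K`. -/
def SubRel {M : Type*} [Monoid M] (r : M → M → Prop) (K : Submonoid M) (a b : K) : Prop :=
  r (a : M) (b : M)

/-- The preorder `⊑` on words induced by `r`: an injection of indices matching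
`r`-equivalent letters. -/
def WordLe {M : Type*} (r : M → M → Prop) (l m : List M) : Prop :=
  ∃ σ : Fin l.length ↪ Fin m.length,
    ∀ i : Fin l.length, r (l.get i) (m.get (σ i)) ∧ r (m.get (σ i)) (l.get i)

/-- `⊑`-equivalence of words. -/
def WordEquiv {M : Type*} (r : M → M → Prop) (l m : List M) : Prop :=
  WordLe r l m ∧ WordLe r m l

/-- `l` is a `≼`-factorization of `x`: a word of `≼`-irreducibles with product `x`. -/
def IsFac {M : Type*} [Monoid M] (r : M → M → Prop) (x : M) (l : List M) : Prop :=
  (∀ a ∈ l, RIrred r a) ∧ l.prod = x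

/-- `l` is a minimal `≼`-factorization of `x`: a `⊑`-minimal `≼`-factorization. -/
def IsMinFac {M : Type*} [Monoid M] (r : M → M → Prop) (x : M) (l : List M) : Prop :=
  IsFac r x l ∧ ∀ m : List M, IsFac r x m → WordLe r m l → WordLe r l m

/-- `l` is an atomic `≼`-factorization of `x`. -/
def IsAtomicFac {M : Type*} [Monoid M] (r : M → M → Prop) (x : M) (l : List M) : Prop :=
  (∀ a ∈ l, RAtom r a) ∧ l.prod = x

/-- `l` is a minimal atomic `≼`-factorization of `x`. -/
def IsMinAtomicFac {M : Type*} [Monoid M] (r : M → M → Prop) (x : M) (l : List M) : Prop :=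
  IsMinFac r x l ∧ ∀ a ∈ l, RAtom r a

/-- Every `≼`-non-unit is a non-empty product of `≼`-irreducibles. -/
def Factorable {M : Type*} [Monoid M] (r : M → M → Prop) : Prop :=
  ∀ x : M, RNonUnit r x →
    ∃ l : List M, l ≠ [] ∧ (∀ a ∈ l, RIrred r a) ∧ l.prod = x

/-- Every `≼`-non-unit is a non-empty product of `≼`-atoms. -/
def Atomic {M : Type*} [Monoid M] (r : M → M → Prop) : Prop :=
  ∀ x : M, RNonUnit r x →
    ∃ l : List M, l ≠ [] ∧ (∀ a ∈ l, RAtom r a) ∧ l.prod = x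

/-- The premonoid `(M, r)` is finitely generated up to units. -/
def IsFGU {M : Type*} [Monoid M] (r : M → M → Prop) : Prop :=
  ∃ A : Set M, A.Finite ∧
    Submonoid.closure
      {w : M | ∃ u a v : M, RUnit r u ∧ a ∈ A ∧ RUnit r v ∧ w = u * a * v} = ⊤

/-- The submonoid generated by the `∣_M`-divisors of `x` (ground monoid of the germ of a
premonoid at `x`). -/
def GermSub {M : Type*} [Monoid M] (x : M) : Submonoid M :=
  Submonoid.closure {y : M | Dvd2 y x}

/-- Membership in the smallest divisor-closed submonoid containing `x`. -/
inductive InDC {M : Type*} [Monoid M] (x : M) : M → Prop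
  | base : InDC x x
  | one : InDC x 1
  | mul {a b : M} : InDC x a → InDC x b → InDC x (a * b)
  | dvd {a b : M} : InDC x b → Dvd2 a b → InDC x a

/-- The smallest divisor-closed submonoid of `M` containing `x`. -/
def DCSub {M : Type*} [Monoid M] (x : M) : Submonoid M where
  carrier := {y : M | InDC x y}
  mul_mem' := fun ha hb => InDC.mul ha hb
  one_mem' := InDC.one

/-- `(M, r)` is a weakly positive monoid. -/
def WeaklyPositive {M : Type*} [Monoid M] (r : M → M → Prop) : Prop :=
  (∀ x u v : M, RUnit r u → RUnit r v → r (u * x * v) x) ∧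
    (∀ x a b : M, r x (a * x * b))

/-- `(M, r)` is locally of finite type (loft). -/
def IsLoft {M : Type*} [Monoid M] (r : M → M → Prop) : Prop :=
  ∀ x : M, RNonUnit r x →
    ∃ A : Set M, A.Finite ∧ A ⊆ {a : M | RIrred r a} ∧
      ∀ l : List M, IsFac r x l →
        ∃ m : List M, (∀ a ∈ m, a ∈ A) ∧ WordEquiv r l m

/-- `(M, r)` is BF-factorable. -/
def IsBFFactorable {M : Type*} [Monoid M] (r : M → M → Prop) : Prop :=
  ∀ x : M, RNonUnit r x →
    {n : ℕ | ∃ l : List M, IsFac r x l ∧ l.length = n}.Finite ∧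
      {n : ℕ | ∃ l : List M, IsFac r x l ∧ l.length = n}.Nonempty

/-- `(M, r)` is BmF-factorable. -/
def IsBmFFactorable {M : Type*} [Monoid M] (r : M → M → Prop) : Prop :=
  ∀ x : M, RNonUnit r x →
    {n : ℕ | ∃ l : List M, IsMinFac r x l ∧ l.length = n}.Finite ∧
      {n : ℕ | ∃ l : List M, IsMinFac r x l ∧ l.length = n}.Nonempty

/-- `(M, r)` is FF-factorable: modulo `⊑`-equivalence, every `≼`-non-unit has finitely
many (and at least one) `≼`-factorizations. -/
def IsFFFactorable {M : Type*} [Monoid M] (r : M → M → Prop) : Prop :=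
  ∀ x : M, RNonUnit r x →
    (∃ l : List M, IsFac r x l) ∧
      ∃ F : Set (List M), F.Finite ∧
        ∀ l : List M, IsFac r x l → ∃ m ∈ F, IsFac r x m ∧ WordEquiv r l m

/-- `(M, r)` is FmF-factorable. -/
def IsFmFFactorable {M : Type*} [Monoid M] (r : M → M → Prop) : Prop :=
  ∀ x : M, RNonUnit r x →
    (∃ l : List M, IsMinFac r x l) ∧
      ∃ F : Set (List M), F.Finite ∧
        ∀ l : List M, IsMinFac r x l → ∃ m ∈ F, IsMinFac r x m ∧ WordEquiv r l m

/-- `(M, r)` is FF-atomic. -/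
def IsFFAtomic {M : Type*} [Monoid M] (r : M → M → Prop) : Prop :=
  ∀ x : M, RNonUnit r x →
    (∃ l : List M, IsAtomicFac r x l) ∧
      ∃ F : Set (List M), F.Finite ∧
        ∀ l : List M, IsAtomicFac r x l → ∃ m ∈ F, IsAtomicFac r x m ∧ WordEquiv r l m

/-- `(M, r)` is FmF-atomic. -/
def IsFmFAtomic {M : Type*} [Monoid M] (r : M → M → Prop) : Prop :=
  ∀ x : M, RNonUnit r x →
    (∃ l : List M, IsMinAtomicFac r x l) ∧
      ∃ F : Set (List M), F.Finite ∧
        ∀ l : List M, IsMinAtomicFac r x l → ∃ m ∈ F, IsMinAtomicFac r x m ∧ WordEquiv r l m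

section Aux

variable {H : Type*} [Monoid H]

lemma isUnit_of_mul (hdf : ∀ x y : H, ¬ IsUnit x → ¬ IsUnit y → ¬ IsUnit (x * y))
    {p q : H} (h : IsUnit (p * q)) : IsUnit p ∧ IsUnit q := by
  by_cases hq : IsUnit q
  · obtain ⟨u, hu⟩ := hq
    have hp : p = (p * q) * ↑u⁻¹ := by rw [← hu, mul_assoc, Units.mul_inv, mul_one]
    exact ⟨hp ▸ h.mul u⁻¹.isUnit, hu ▸ u.isUnit⟩
  · by_cases hp : IsUnit p
    · obtain ⟨u, hu⟩ := hp
      have hq' : q = ↑u⁻¹ * (p * q) := by rw [← hu, ← mul_assoc, Units.inv_mul, one_mul]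
      exact absurd (hq' ▸ u⁻¹.isUnit.mul h) hq
    · exact absurd h (hdf p q hp hq)

lemma runit_iff (hdf : ∀ x y : H, ¬ IsUnit x → ¬ IsUnit y → ¬ IsUnit (x * y))
    {u : H} : RUnit (Dvd2 : H → H → Prop) u ↔ IsUnit u := by
  constructor
  · rintro ⟨⟨a, b, hab⟩, -⟩
    have h1 : IsUnit (a * u * b) := hab ▸ isUnit_one
    exact (isUnit_of_mul hdf (isUnit_of_mul hdf h1).1).2
  · intro hu
    obtain ⟨w, hw⟩ := hu
    refine ⟨⟨↑w⁻¹, 1, ?_⟩, ⟨u, 1, by simp⟩⟩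
    rw [← hw, mul_one, Units.inv_mul]

lemma rnonunit_iff (hdf : ∀ x y : H, ¬ IsUnit x → ¬ IsUnit y → ¬ IsUnit (x * y))
    {u : H} : RNonUnit (Dvd2 : H → H → Prop) u ↔ ¬ IsUnit u :=
  not_congr (runit_iff hdf)

lemma dvd2_refl (x : H) : Dvd2 x x := ⟨1, 1, by simp⟩

lemma dvd2_trans {a b c : H} (h1 : Dvd2 a b) (h2 : Dvd2 b c) : Dvd2 a c := by
  obtain ⟨u, v, rfl⟩ := h1
  obtain ⟨p, q, rfl⟩ := h2
  exact ⟨p * u, v * q, by simp [mul_assoc]⟩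

lemma dvd2_sandwich {a u v : H} : Dvd2 a (u * a * v) := ⟨u, v, rfl⟩

lemma dvd2_mul_right {a c : H} : Dvd2 a (a * c) := ⟨1, c, by simp [mul_assoc]⟩

lemma dvd2_mul_left {a c : H} : Dvd2 a (c * a) := ⟨c, 1, by simp⟩

lemma not_unit_of_dvd2 (hdf : ∀ x y : H, ¬ IsUnit x → ¬ IsUnit y → ¬ IsUnit (x * y))
    {c g : H} (h : Dvd2 c g) (hc : ¬ IsUnit c) : ¬ IsUnit g := by
  rintro hg
  obtain ⟨p, q, rfl⟩ := h
  exact hc (isUnit_of_mul hdf (isUnit_of_mul hdf hg).1).2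

/-- `UProd l g`: `g` is a product of the letters of `l` interleaved with units. -/
def UProd : List H → H → Prop
  | [], g => IsUnit g
  | c :: t, g => ∃ u h : H, IsUnit u ∧ UProd t h ∧ g = u * c * h

lemma UProd.unit_mul {l : List H} {g u : H} (hu : IsUnit u) (h : UProd l g) :
    UProd l (u * g) := by
  cases l with
  | nil => exact hu.mul h
  | cons c t =>
    obtain ⟨u', h', hu', ht, rfl⟩ := h
    exact ⟨u * u', h', hu.mul hu', ht, by simp [mul_assoc]⟩

lemma UProd.mul_unit {l : List H} {g v : H} (hv : IsUnit v) (h : UProd l g) :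
    UProd l (g * v) := by
  induction l generalizing g with
  | nil => exact h.mul hv
  | cons c t ih =>
    obtain ⟨u', h', hu', ht, rfl⟩ := h
    exact ⟨u', h' * v, hu', ih ht, by simp [mul_assoc]⟩

lemma UProd.append {l l' : List H} {g g' : H} (h : UProd l g) (h' : UProd l' g') :
    UProd (l ++ l') (g * g') := by
  induction l generalizing g with
  | nil => simpa using h'.unit_mul h
  | cons c t ih =>
    obtain ⟨u', h'', hu', ht, rfl⟩ := h
    exact ⟨u', h'' * g', hu', ih ht, by simp [mul_assoc]⟩

lemma UProd.letters_dvd {l : List H} {g : H} (h : UProd l g) : ∀ c ∈ l, Dvd2 c g := by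
  induction l generalizing g with
  | nil => intro c hc; simp at hc
  | cons c t ih =>
    obtain ⟨u', h', hu', ht, rfl⟩ := h
    intro d hd
    rcases List.mem_cons.1 hd with rfl | hd'
    · exact dvd2_sandwich
    · exact dvd2_trans (ih ht d hd') dvd2_mul_left

lemma UProd.ne_nil {l : List H} {g : H} (h : UProd l g) (hg : ¬ IsUnit g) : l ≠ [] := by
  rintro rfl; exact hg h

end Aux

section Aux2

variable {H : Type*} [Monoid H]

lemma rirred_unit_mul_unit (hdf : ∀ x y : H, ¬ IsUnit x → ¬ IsUnit y → ¬ IsUnit (x * y))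
    {a : H} (ha : RIrred (Dvd2 : H → H → Prop) a) {u v : H} (hu : IsUnit u) (hv : IsUnit v) :
    RIrred (Dvd2 : H → H → Prop) (u * a * v) := by
  obtain ⟨U, rfl⟩ := hu
  obtain ⟨V, rfl⟩ := hv
  have hanu : ¬ IsUnit a := (rnonunit_iff hdf).1 ha.1
  have hdvd_a : Dvd2 (↑U * a * ↑V) a := by
    refine ⟨↑U⁻¹, ↑V⁻¹, ?_⟩
    calc a = ↑U⁻¹ * ↑U * a * (↑V * ↑V⁻¹) := by rw [Units.inv_mul, Units.mul_inv, one_mul, mul_one]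
    _ = ↑U⁻¹ * (↑U * a * ↑V) * ↑V⁻¹ := by simp [mul_assoc]
  constructor
  · rw [rnonunit_iff hdf]
    intro h
    exact hanu (isUnit_of_mul hdf (isUnit_of_mul hdf h).1).2
  · intro y z hy hz hyl hzl heq
    have hynu : ¬ IsUnit y := (rnonunit_iff hdf).1 hy
    have hznu : ¬ IsUnit z := (rnonunit_iff hdf).1 hz
    have key : a = (↑U⁻¹ * y) * (z * ↑V⁻¹) := by
      have : a = ↑U⁻¹ * (↑U * a * ↑V) * ↑V⁻¹ := by
        calc a = ↑U⁻¹ * ↑U * a * (↑V * ↑V⁻¹) := by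
                rw [Units.inv_mul, Units.mul_inv, one_mul, mul_one]
        _ = ↑U⁻¹ * (↑U * a * ↑V) * ↑V⁻¹ := by simp [mul_assoc]
      rw [this, heq]; simp [mul_assoc]
    refine ha.2 (↑U⁻¹ * y) (z * ↑V⁻¹) ?_ ?_ ?_ ?_ key
    · rw [rnonunit_iff hdf]
      intro h
      exact hynu (by simpa [← mul_assoc, Units.mul_inv] using (U.isUnit.mul h : IsUnit (↑U * (↑U⁻¹ * y))))
    · rw [rnonunit_iff hdf]
      intro h
      exact hznu (by simpa [mul_assoc, Units.inv_mul] using (h.mul V.isUnit : IsUnit ((z * ↑V⁻¹) * ↑V)))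
    · constructor
      · exact ⟨1, z * ↑V⁻¹, by rw [key, one_mul]⟩
      · rintro ⟨p, q, hpq⟩
        -- hpq : ↑U⁻¹ * y = p * a * q  →  Dvd2 (U a V) y
        refine hyl.2 ?_
        have : y = (↑U * p) * a * q := by
          calc y = ↑U * (↑U⁻¹ * y) := by rw [← mul_assoc, Units.mul_inv, one_mul]
          _ = ↑U * (p * a * q) := by rw [hpq]
          _ = (↑U * p) * a * q := by simp [mul_assoc]
        exact dvd2_trans hdvd_a ⟨↑U * p, q, this⟩
    · constructor
      · exact ⟨↑U⁻¹ * y, 1, by rw [key]; simp [mul_assoc]⟩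
      · rintro ⟨p, q, hpq⟩
        refine hzl.2 ?_
        have : z = p * a * (q * ↑V) := by
          calc z = (z * ↑V⁻¹) * ↑V := by rw [mul_assoc, Units.inv_mul, mul_one]
          _ = (p * a * q) * ↑V := by rw [hpq]
          _ = p * a * (q * ↑V) := by simp [mul_assoc]
        exact dvd2_trans hdvd_a ⟨p, q * ↑V, this⟩

/-- `g` is a (nonempty) product of `∣`-irreducibles. -/
def IsPI (g : H) : Prop :=
  ∃ l : List H, l ≠ [] ∧ (∀ a ∈ l, RIrred (Dvd2 : H → H → Prop) a) ∧ l.prod = g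

lemma IsPI.mul {g g' : H} (h : IsPI g) (h' : IsPI g') : IsPI (g * g') := by
  obtain ⟨l, hl, hirr, rfl⟩ := h
  obtain ⟨l', hl', hirr', rfl⟩ := h'
  refine ⟨l ++ l', by simp [hl], ?_, by rw [List.prod_append]⟩
  intro a ha
  rcases List.mem_append.1 ha with h | h
  exacts [hirr a h, hirr' a h]

lemma IsPI.unit_mul_unit (hdf : ∀ x y : H, ¬ IsUnit x → ¬ IsUnit y → ¬ IsUnit (x * y))
    {g u v : H} (hu : IsUnit u) (hv : IsUnit v) (h : IsPI g) : IsPI (u * g * v) := by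
  obtain ⟨l, hl, hirr, rfl⟩ := h
  induction l generalizing u with
  | nil => exact absurd rfl hl
  | cons a t ih =>
    cases t with
    | nil =>
      refine ⟨[u * a * v], by simp, ?_, by simp⟩
      intro b hb
      rw [List.mem_singleton] at hb
      subst hb
      exact rirred_unit_mul_unit hdf (hirr a (by simp)) hu hv
    | cons a' t' =>
      have hrest : IsPI (1 * (a' :: t').prod * v) :=
        ih isUnit_one (by simp) (fun b hb => hirr b (List.mem_cons_of_mem a hb))
      obtain ⟨m, hm, hmirr, hmprod⟩ := hrest
      refine ⟨(u * a * 1) :: m, by simp, ?_, ?_⟩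
      · intro b hb
        rcases List.mem_cons.1 hb with rfl | hb'
        · exact rirred_unit_mul_unit hdf (hirr a (by simp)) hu isUnit_one
        · exact hmirr b hb'
      · rw [List.prod_cons, hmprod, List.prod_cons]
        simp [mul_assoc]

lemma IsPI.unit_mul (hdf : ∀ x y : H, ¬ IsUnit x → ¬ IsUnit y → ¬ IsUnit (x * y))
    {g u : H} (hu : IsUnit u) (h : IsPI g) : IsPI (u * g) := by
  simpa using h.unit_mul_unit hdf hu isUnit_one

lemma IsPI.of_UProd (hdf : ∀ x y : H, ¬ IsUnit x → ¬ IsUnit y → ¬ IsUnit (x * y))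
    {l : List H} {g : H} (h : UProd l g) (hl : l ≠ []) (hletters : ∀ c ∈ l, IsPI c) :
    IsPI g := by
  induction l generalizing g with
  | nil => exact absurd rfl hl
  | cons c t ih =>
    obtain ⟨u, h', hu, ht, rfl⟩ := h
    have hc : IsPI c := hletters c (by simp)
    cases t with
    | nil =>
      exact hc.unit_mul_unit hdf hu ht
    | cons c' t' =>
      have hh' : IsPI h' := ih ht (by simp) fun b hb => hletters b (List.mem_cons_of_mem c hb)
      have : IsPI (c * h') := hc.mul hh'
      have := this.unit_mul hdf hu
      simpa [mul_assoc] using this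

end Aux2

section Aux3

variable {H : Type*} [Monoid H]

lemma germ_decomp (hdf : ∀ x y : H, ¬ IsUnit x → ¬ IsUnit y → ¬ IsUnit (x * y))
    {x : H} (hfgu : IsFGU (SubRel (Dvd2 : H → H → Prop) (GermSub x))) :
    ∃ A : Set H, A.Finite ∧ (∀ c ∈ A, Dvd2 c x ∧ ¬ IsUnit c) ∧
      ∀ g ∈ GermSub x, ∃ l : List H, (∀ c ∈ l, c ∈ A) ∧ UProd l g := by
  classical
  have stepA : ∀ g ∈ GermSub x,
      ∃ l : List H, (∀ c ∈ l, Dvd2 c x ∧ ¬ IsUnit c) ∧ UProd l g := by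
    intro g hg
    refine Submonoid.closure_induction ?_ ?_ ?_ hg
    · intro y hy
      by_cases hyu : IsUnit y
      · exact ⟨[], by simp, hyu⟩
      · exact ⟨[y], by simpa using ⟨hy, hyu⟩, ⟨1, 1, isUnit_one, isUnit_one, by simp⟩⟩
    · exact ⟨[], by simp, isUnit_one⟩
    · rintro a b ha hb ⟨l₁, hl₁, hu₁⟩ ⟨l₂, hl₂, hu₂⟩
      refine ⟨l₁ ++ l₂, ?_, hu₁.append hu₂⟩
      intro c hc
      rcases List.mem_append.1 hc with h | h
      exacts [hl₁ c h, hl₂ c h]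
  obtain ⟨A₀, hA₀fin, hA₀top⟩ := hfgu
  have hex : ∀ a : ↥(GermSub x),
      ∃ l : List H, (∀ c ∈ l, Dvd2 c x ∧ ¬ IsUnit c) ∧ UProd l ↑a :=
    fun a => stepA ↑a a.2
  choose F hF1 hF2 using hex
  refine ⟨⋃ a ∈ A₀, {c | c ∈ F a}, hA₀fin.biUnion fun a _ => (F a).finite_toSet, ?_, ?_⟩
  · intro c hc
    simp only [Set.mem_iUnion, Set.mem_setOf_eq] at hc
    obtain ⟨a, _, hc⟩ := hc
    exact hF1 a c hc
  · intro g hg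
    have hmem : (⟨g, hg⟩ : ↥(GermSub x)) ∈ Submonoid.closure
        {w : ↥(GermSub x) | ∃ u a v : ↥(GermSub x),
          RUnit (SubRel (Dvd2 : H → H → Prop) (GermSub x)) u ∧ a ∈ A₀ ∧
          RUnit (SubRel (Dvd2 : H → H → Prop) (GermSub x)) v ∧ w = u * a * v} := by
      rw [hA₀top]; trivial
    have goal : ∀ z : ↥(GermSub x), z ∈ Submonoid.closure
        {w : ↥(GermSub x) | ∃ u a v : ↥(GermSub x),
          RUnit (SubRel (Dvd2 : H → H → Prop) (GermSub x)) u ∧ a ∈ A₀ ∧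
          RUnit (SubRel (Dvd2 : H → H → Prop) (GermSub x)) v ∧ w = u * a * v} →
        ∃ l : List H, (∀ c ∈ l, c ∈ ⋃ a ∈ A₀, {c | c ∈ F a}) ∧ UProd l (↑z : H) := by
      intro z hz
      refine Submonoid.closure_induction ?_ ?_ ?_ hz
      · rintro w ⟨u, a, v, hu, haA, hv, rfl⟩
        have huH : IsUnit (↑u : H) := by
          have : RUnit (Dvd2 : H → H → Prop) (↑u : H) := by
            obtain ⟨h1, h2⟩ := hu
            exact ⟨h1, h2⟩
          exact (runit_iff hdf).1 this
        have hvH : IsUnit (↑v : H) := by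
          have : RUnit (Dvd2 : H → H → Prop) (↑v : H) := by
            obtain ⟨h1, h2⟩ := hv
            exact ⟨h1, h2⟩
          exact (runit_iff hdf).1 this
        refine ⟨F a, ?_, ?_⟩
        · intro c hc
          simp only [Set.mem_iUnion, Set.mem_setOf_eq]
          exact ⟨a, haA, hc⟩
        · have : UProd (F a) ((↑u : H) * ↑a * ↑v) := ((hF2 a).unit_mul huH).mul_unit hvH
          simpa using this
      · refine ⟨[], by simp, ?_⟩
        show IsUnit ((1 : ↥(GermSub x)) : H)
        rw [OneMemClass.coe_one]
        exact isUnit_one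
      · rintro p q hp hq ⟨l₁, hl₁, hu₁⟩ ⟨l₂, hl₂, hu₂⟩
        refine ⟨l₁ ++ l₂, ?_, by simpa using hu₁.append hu₂⟩
        intro c hc
        rcases List.mem_append.1 hc with h | h
        exacts [hl₁ c h, hl₂ c h]
    exact goal ⟨g, hg⟩ hmem

theorem factorable_aux (hdf : ∀ x y : H, ¬ IsUnit x → ¬ IsUnit y → ¬ IsUnit (x * y))
    (hwlfgu : ∀ x : H, RNonUnit (Dvd2 : H → H → Prop) x →
      IsFGU (SubRel (Dvd2 : H → H → Prop) (GermSub x))) :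
    Factorable (Dvd2 : H → H → Prop) := by
  intro x hx
  by_contra hnpi
  have hnpi' : ¬ IsPI x := hnpi
  obtain ⟨A, hAfin, hAdvd, hAdec⟩ := germ_decomp hdf (hwlfgu x hx)
  have hmemK : ∀ {w : H}, Dvd2 w x → w ∈ GermSub x := fun hw =>
    Submonoid.subset_closure hw
  set bad : H → Prop := fun b => Dvd2 b x ∧ ¬ IsUnit b ∧ ¬ IsPI b with hbad_def
  have key : ∀ b, bad b → ∃ a, a ∈ A ∧ bad a ∧ RLt (Dvd2 : H → H → Prop) a b := by
    rintro b ⟨hbx, hbu, hbnpi⟩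
    by_contra hno
    push_neg at hno
    -- b is not irreducible
    have hbirr : ¬ RIrred (Dvd2 : H → H → Prop) b := by
      intro h
      exact hbnpi ⟨[b], by simp, by simpa using h, by simp⟩
    rw [RIrred] at hbirr
    push_neg at hbirr
    obtain ⟨y, z, hy, hz, hyl, hzl, heq⟩ := hbirr ((rnonunit_iff hdf).2 hbu)
    have hPIpart : ∀ w : H, RLt (Dvd2 : H → H → Prop) w b → ¬ IsUnit w → IsPI w := by
      intro w hwb hwu
      have hwx : Dvd2 w x := dvd2_trans hwb.1 hbx
      obtain ⟨l, hlA, hlU⟩ := hAdec w (hmemK hwx)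
      refine IsPI.of_UProd hdf hlU (hlU.ne_nil hwu) ?_
      intro c hc
      by_contra hcnpi
      have hcA := hlA c hc
      have hcb : Dvd2 c b := dvd2_trans (hlU.letters_dvd c hc) hwb.1
      have hbc : Dvd2 b c := by
        by_contra h
        exact hno c hcA ⟨(hAdvd c hcA).1, (hAdvd c hcA).2, hcnpi⟩ ⟨hcb, h⟩
      exact hwb.2 (dvd2_trans hbc (hlU.letters_dvd c hc))
    have hyPI := hPIpart y hyl ((rnonunit_iff hdf).1 hy)
    have hzPI := hPIpart z hzl ((rnonunit_iff hdf).1 hz)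
    exact hbnpi (heq ▸ hyPI.mul hzPI)
  -- build the infinite strictly descending sequence inside A
  have hbadx : bad x := ⟨dvd2_refl x, (rnonunit_iff hdf).1 hx, hnpi'⟩
  let T := {b : H // bad b}
  let step : T → T := fun b => ⟨(key b.1 b.2).choose, ((key b.1 b.2).choose_spec).2.1⟩
  have hstep : ∀ b : T, (step b).1 ∈ A ∧ RLt (Dvd2 : H → H → Prop) (step b).1 b.1 :=
    fun b => ⟨((key b.1 b.2).choose_spec).1, ((key b.1 b.2).choose_spec).2.2⟩
  let seq : ℕ → T := fun n => step^[n] ⟨x, hbadx⟩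
  have hseq_succ : ∀ n, seq (n + 1) = step (seq n) := by
    intro n
    simp only [seq, Function.iterate_succ_apply']
  have hchain : ∀ n, RLt (Dvd2 : H → H → Prop) (seq (n + 1)).1 (seq n).1 := by
    intro n; rw [hseq_succ n]; exact (hstep (seq n)).2
  have hmemA : ∀ n, (seq (n + 1)).1 ∈ A := by
    intro n; rw [hseq_succ n]; exact (hstep (seq n)).1
  have hdvd : ∀ i j, i ≤ j → Dvd2 (seq j).1 (seq i).1 := by
    intro i j hij
    induction j with
    | zero => simp_all [Nat.le_zero.1 hij, dvd2_refl]
    | succ j ih =>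
      rcases Nat.lt_or_ge i (j + 1) with h | h
      · exact dvd2_trans (hchain j).1 (ih (Nat.lt_succ_iff.1 h))
      · have : i = j + 1 := le_antisymm hij h
        subst this; exact dvd2_refl _
  haveI : Finite ↥A := hAfin.to_subtype
  obtain ⟨i, j, hne, heq⟩ :=
    Finite.exists_ne_map_eq_of_infinite (fun n : ℕ => (⟨(seq (n + 1)).1, hmemA n⟩ : ↥A))
  have key2 : ∀ i j : ℕ, i < j → (seq (i + 1)).1 ≠ (seq (j + 1)).1 := by
    intro i j hij h
    have h1 : Dvd2 (seq j).1 (seq (i + 1)).1 := hdvd (i + 1) j hij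
    exact (hchain j).2 (h ▸ h1)
  have heq' : (seq (i + 1)).1 = (seq (j + 1)).1 := by simpa using heq
  rcases lt_or_gt_of_ne hne with h | h
  · exact key2 i j h heq'
  · exact key2 j i h heq'.symm

end Aux3

section Aux4

variable {H : Type*} [Monoid H]

lemma wordLe_refl (l : List H) : WordLe (Dvd2 : H → H → Prop) l l :=
  ⟨Function.Embedding.refl _, fun i => ⟨dvd2_refl _, dvd2_refl _⟩⟩

lemma wordLe_trans {a b c : List H} (h1 : WordLe (Dvd2 : H → H → Prop) a b)
    (h2 : WordLe (Dvd2 : H → H → Prop) b c) : WordLe (Dvd2 : H → H → Prop) a c := by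
  obtain ⟨σ, hσ⟩ := h1
  obtain ⟨τ, hτ⟩ := h2
  refine ⟨σ.trans τ, fun i => ?_⟩
  exact ⟨dvd2_trans (hσ i).1 (hτ (σ i)).1, dvd2_trans (hτ (σ i)).2 (hσ i).2⟩

lemma wordLe_length_le {r : H → H → Prop} {l m : List H} (h : WordLe r l m) :
    l.length ≤ m.length := by
  obtain ⟨σ, -⟩ := h
  simpa using Fintype.card_le_of_embedding σ

lemma wordLe_symm_of_length {r : H → H → Prop} {l m : List H} (h : WordLe r l m)
    (hlen : m.length ≤ l.length) : WordLe r m l := by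
  obtain ⟨σ, hσ⟩ := h
  have hbij : Function.Bijective σ := by
    rw [Fintype.bijective_iff_injective_and_card]
    exact ⟨σ.injective, by simp [le_antisymm (by simpa using Fintype.card_le_of_embedding σ)
      (by simpa using hlen)]⟩
  let e := Equiv.ofBijective σ hbij
  refine ⟨e.symm.toEmbedding, fun i => ?_⟩
  have h2 : σ (e.symm i) = i := e.apply_symm_apply i
  have := hσ (e.symm i)
  rw [h2] at this
  exact ⟨this.2, this.1⟩

lemma exists_minFac {x : H} {l : List H} (h : IsFac (Dvd2 : H → H → Prop) x l) :
    ∃ m, IsMinFac (Dvd2 : H → H → Prop) x m ∧ WordLe (Dvd2 : H → H → Prop) m l := by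
  have main : ∀ (n : ℕ) (l : List H), l.length ≤ n → IsFac (Dvd2 : H → H → Prop) x l →
      ∃ m, IsMinFac (Dvd2 : H → H → Prop) x m ∧ WordLe (Dvd2 : H → H → Prop) m l := by
    intro n
    induction n with
    | zero =>
      intro l hlen hfac
      refine ⟨l, ⟨hfac, ?_⟩, wordLe_refl l⟩
      intro m' hm' hle
      have : m'.length = 0 := Nat.le_zero.1 (le_trans (wordLe_length_le hle) hlen)
      exact wordLe_symm_of_length hle (by omega)
    | succ n ih =>
      intro l hlen hfac
      by_cases hmin : ∀ m', IsFac (Dvd2 : H → H → Prop) x m' →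
          WordLe (Dvd2 : H → H → Prop) m' l → WordLe (Dvd2 : H → H → Prop) l m'
      · exact ⟨l, ⟨hfac, hmin⟩, wordLe_refl l⟩
      · push_neg at hmin
        obtain ⟨m', hfac', hle', hnle⟩ := hmin
        have hlt : m'.length < l.length := by
          rcases lt_or_ge m'.length l.length with h | h
          · exact h
          · exact absurd (wordLe_symm_of_length hle' h) hnle
        obtain ⟨m, hmmin, hmle⟩ := ih m' (by omega) hfac'
        exact ⟨m, hmmin, wordLe_trans hmle hle'⟩
  exact main l.length l le_rfl h

end Aux4

section Aux5

variable {α : Type*}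

/-- Extend an index embedding through a `cons` on both sides. -/
def embCons {n m : ℕ} (σ : Fin n ↪ Fin m) : Fin (n + 1) ↪ Fin (m + 1) where
  toFun := Fin.cases 0 fun k => (σ k).succ
  inj' := by
    intro i j h
    rcases Fin.eq_zero_or_eq_succ i with rfl | ⟨k, rfl⟩ <;>
      rcases Fin.eq_zero_or_eq_succ j with rfl | ⟨k', rfl⟩
    · rfl
    · simp only [Fin.cases_zero, Fin.cases_succ] at h
      exact absurd h.symm (Fin.succ_ne_zero _)
    · simp only [Fin.cases_zero, Fin.cases_succ] at h
      exact absurd h (Fin.succ_ne_zero _)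
    · simp only [Fin.cases_succ] at h
      rw [σ.injective (Fin.succ_injective _ h)]

@[simp] lemma embCons_zero {n m : ℕ} (σ : Fin n ↪ Fin m) : embCons σ 0 = 0 := rfl

@[simp] lemma embCons_succ {n m : ℕ} (σ : Fin n ↪ Fin m) (k : Fin n) :
    embCons σ k.succ = (σ k).succ := by
  show Fin.cases (motive := fun _ => Fin (m + 1)) 0 (fun k => (σ k).succ) k.succ = (σ k).succ
  simp only [Fin.cases_succ]

lemma emb_of_perm {l m : List α} (h : l.Perm m) :
    ∃ σ : Fin l.length ↪ Fin m.length, ∀ i, m.get (σ i) = l.get i := by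
  induction h with
  | nil => exact ⟨Function.Embedding.refl _, fun i => i.elim0⟩
  | cons a h ih =>
    obtain ⟨σ, hσ⟩ := ih
    refine ⟨embCons σ, fun i => ?_⟩
    rcases Fin.eq_zero_or_eq_succ i with rfl | ⟨k, rfl⟩
    · simp
    · simpa using hσ k
  | swap a b t =>
    refine ⟨(Equiv.swap (0 : Fin (t.length + 1 + 1)) 1).toEmbedding, fun i => ?_⟩
    rcases Fin.eq_zero_or_eq_succ i with rfl | ⟨k, rfl⟩
    · simp [Equiv.swap_apply_left]
    · rcases Fin.eq_zero_or_eq_succ k with rfl | ⟨k', rfl⟩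
      · simp [Equiv.swap_apply_right]
      · have h0 : k'.succ.succ ≠ (0 : Fin (t.length + 1 + 1)) := Fin.succ_ne_zero _
        have h1 : k'.succ.succ ≠ (1 : Fin (t.length + 1 + 1)) := by
          intro h
          have := Fin.succ_injective _ (h.trans (by rfl : (1 : Fin (t.length + 1 + 1)) = (0 : Fin (t.length + 1)).succ))
          exact Fin.succ_ne_zero _ this
        simp [Equiv.swap_apply_of_ne_of_ne h0 h1]
  | trans h1 h2 ih1 ih2 =>
    obtain ⟨σ, hσ⟩ := ih1
    obtain ⟨τ, hτ⟩ := ih2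
    exact ⟨σ.trans τ, fun i => (hτ (σ i)).trans (hσ i)⟩

lemma emb_of_sublist {l m : List α} (h : l.Sublist m) :
    ∃ σ : Fin l.length ↪ Fin m.length, ∀ i, m.get (σ i) = l.get i := by
  induction h with
  | slnil => exact ⟨Function.Embedding.refl _, fun i => i.elim0⟩
  | cons a h ih =>
    obtain ⟨σ, hσ⟩ := ih
    refine ⟨σ.trans ⟨Fin.succ, Fin.succ_injective _⟩, fun i => ?_⟩
    simpa using hσ i
  | cons_cons a h ih =>
    obtain ⟨σ, hσ⟩ := ih
    refine ⟨embCons σ, fun i => ?_⟩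
    rcases Fin.eq_zero_or_eq_succ i with rfl | ⟨k, rfl⟩
    · simp
    · simpa using hσ k

lemma emb_of_subperm {l m : List α} (h : l.Subperm m) :
    ∃ σ : Fin l.length ↪ Fin m.length, ∀ i, m.get (σ i) = l.get i := by
  obtain ⟨l', hperm, hsub⟩ := h
  obtain ⟨σ₁, hσ₁⟩ := emb_of_perm hperm.symm
  obtain ⟨σ₂, hσ₂⟩ := emb_of_sublist hsub
  exact ⟨σ₁.trans σ₂, fun i => (hσ₂ (σ₁ i)).trans (hσ₁ i)⟩

end Aux5

section Aux6

variable {ι : Type*} [Fintype ι]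

lemma dickson_aux (t : Finset ι) (F : ℕ → ι → ℕ) :
    ∃ g : ℕ ↪o ℕ, ∀ b ∈ t, Monotone fun n => F (g n) b := by
  classical
  induction t using Finset.induction_on with
  | empty => exact ⟨(RelEmbedding.refl _ : ℕ ↪o ℕ), by simp⟩
  | @insert a t ha ih =>
    obtain ⟨g₁, hg₁⟩ := ih
    have hpwo : (Set.univ : Set ℕ).IsPWO := (Set.isWF_univ_iff.mpr inferInstance).isPWO
    obtain ⟨g₂, hg₂⟩ := hpwo.exists_monotone_subseq (f := fun n => F (g₁ n) a)
      (fun _ => Set.mem_univ _)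
    refine ⟨g₂.trans g₁, fun b hb => ?_⟩
    rcases Finset.mem_insert.1 hb with rfl | hb'
    · exact hg₂
    · exact (hg₁ b hb').comp g₂.monotone

lemma dickson (f : ℕ → ι → ℕ) : ∃ i j, i < j ∧ f i ≤ f j := by
  obtain ⟨g, hg⟩ := dickson_aux (Finset.univ : Finset ι) f
  refine ⟨g 0, g 1, g.strictMono (by omega), fun b => ?_⟩
  exact hg b (Finset.mem_univ b) (by omega : (0:ℕ) ≤ 1)

lemma antichain_finite {S : Set (ι → ℕ)}
    (h : ∀ u ∈ S, ∀ v ∈ S, u ≤ v → u = v) : S.Finite := by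
  by_contra hinf
  have hS : S.Infinite := hinf
  let f := hS.natEmbedding
  obtain ⟨i, j, hij, hle⟩ := dickson fun n => (f n : ι → ℕ)
  have : (f i : ι → ℕ) = (f j : ι → ℕ) := h _ (f i).2 _ (f j).2 hle
  have : f i = f j := Subtype.ext this
  rw [f.injective this] at hij
  exact Nat.lt_irrefl j hij

end Aux6

section Aux7

variable {H : Type*} [Monoid H]

lemma dvd2_prod_of_mem : ∀ (l : List H) (b : H), b ∈ l → Dvd2 b l.prod := by
  intro l
  induction l with
  | nil => intro b hb; simp at hb
  | cons a t ih =>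
    intro b hb
    rcases List.mem_cons.1 hb with rfl | hb'
    · rw [List.prod_cons]; exact dvd2_mul_right
    · exact dvd2_trans (ih b hb') (by rw [List.prod_cons]; exact dvd2_mul_left)

lemma length_eq_sum_count [DecidableEq H] (s : Finset H) :
    ∀ L : List H, (∀ v ∈ L, v ∈ s) → (∑ a ∈ s, L.count a) = L.length := by
  intro L
  induction L with
  | nil => simp
  | cons v L ih =>
    intro hmem
    have hv : v ∈ s := hmem v (by simp)
    have hL : ∀ w ∈ L, w ∈ s := fun w hw => hmem w (List.mem_cons_of_mem v hw)
    calc (∑ a ∈ s, (v :: L).count a) = ∑ a ∈ s, (L.count a + if v = a then 1 else 0) := by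
          apply Finset.sum_congr rfl
          intro a _
          simp [List.count_cons]
      _ = (∑ a ∈ s, L.count a) + ∑ a ∈ s, (if v = a then 1 else 0) := Finset.sum_add_distrib
      _ = L.length + 1 := by rw [ih hL, Finset.sum_ite_eq s v (fun _ => 1), if_pos hv]
      _ = (v :: L).length := by simp

theorem fmf_aux (hdf : ∀ x y : H, ¬ IsUnit x → ¬ IsUnit y → ¬ IsUnit (x * y))
    (hwlfgu : ∀ x : H, RNonUnit (Dvd2 : H → H → Prop) x →
      IsFGU (SubRel (Dvd2 : H → H → Prop) (GermSub x)))
    (hirr : ∀ a : H, RIrred (Dvd2 : H → H → Prop) a →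
        ¬ IsUnit a ∧ ∀ y z : H, ¬ IsUnit y → ¬ IsUnit z → a ≠ y * z) :
    IsFmFAtomic (Dvd2 : H → H → Prop) := by
  classical
  intro x hx
  -- irreducibles are atoms
  have hIA : ∀ a : H, RIrred (Dvd2 : H → H → Prop) a → RAtom (Dvd2 : H → H → Prop) a := by
    intro a ha
    refine ⟨ha.1, fun y z hy hz => ?_⟩
    exact (hirr a ha).2 y z ((rnonunit_iff hdf).1 hy) ((rnonunit_iff hdf).1 hz)
  -- existence of a minimal atomic factorization
  obtain ⟨l₀, hl₀ne, hl₀irr, hl₀prod⟩ := factorable_aux hdf hwlfgu x hx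
  obtain ⟨m₀, hm₀, -⟩ := exists_minFac (x := x) ⟨hl₀irr, hl₀prod⟩
  have hexist : IsMinAtomicFac (Dvd2 : H → H → Prop) x m₀ :=
    ⟨hm₀, fun a ha => hIA a (hm₀.1.1 a ha)⟩
  -- alphabet from the germ
  obtain ⟨A, hAfin, hAdvd, hAdec⟩ := germ_decomp hdf (hwlfgu x hx)
  set s := hAfin.toFinset with hs_def
  -- every atom dividing x is div-equivalent to a letter in s
  have hatom_letter : ∀ b : H, Dvd2 b x → RAtom (Dvd2 : H → H → Prop) b →
      ∃ c ∈ s, Dvd2 b c ∧ Dvd2 c b := by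
    intro b hbx hb
    have hbu : ¬ IsUnit b := (rnonunit_iff hdf).1 hb.1
    obtain ⟨l, hlA, hlU⟩ := hAdec b (Submonoid.subset_closure hbx)
    cases l with
    | nil => exact absurd hlU hbu
    | cons c t =>
      obtain ⟨u, h, hu, ht, heq⟩ := hlU
      cases t with
      | nil =>
        have hcA : c ∈ A := hlA c (by simp)
        refine ⟨c, hAfin.mem_toFinset.2 hcA, ?_, ?_⟩
        · obtain ⟨U, rfl⟩ := hu
          obtain ⟨V, rfl⟩ := (ht : IsUnit h)
          refine ⟨↑U⁻¹, ↑V⁻¹, ?_⟩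
          rw [heq]
          symm
          calc ↑U⁻¹ * (↑U * c * ↑V) * ↑V⁻¹
              = (↑U⁻¹ * ↑U) * c * (↑V * ↑V⁻¹) := by simp [mul_assoc]
            _ = c := by rw [Units.inv_mul, Units.mul_inv, one_mul, mul_one]
        · exact ⟨u, h, heq⟩
      | cons c' t' =>
        exfalso
        have hc'A : c' ∈ A := hlA c' (by simp)
        have hhu : ¬ IsUnit h :=
          not_unit_of_dvd2 hdf (ht.letters_dvd c' (by simp)) (hAdvd c' hc'A).2
        have hcA : c ∈ A := hlA c (by simp)
        have hucu : ¬ IsUnit (u * c) := fun h' =>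
          (hAdvd c hcA).2 (isUnit_of_mul hdf h').2
        have hbna := hb.2 (u * c) h ((rnonunit_iff hdf).2 hucu) ((rnonunit_iff hdf).2 hhu)
        exact hbna heq
  -- the class function
  let cl : H → H := fun b => Classical.epsilon fun c => c ∈ s ∧ Dvd2 b c ∧ Dvd2 c b
  have hcl_spec : ∀ b : H, (∃ c ∈ s, Dvd2 b c ∧ Dvd2 c b) →
      cl b ∈ s ∧ Dvd2 b (cl b) ∧ Dvd2 (cl b) b := by
    intro b hb
    obtain ⟨c, hc, h1, h2⟩ := hb
    exact Classical.epsilon_spec (p := fun c => c ∈ s ∧ Dvd2 b c ∧ Dvd2 c b) ⟨c, hc, h1, h2⟩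
  -- letters of minimal atomic factorizations
  have hletter : ∀ l : List H, IsMinAtomicFac (Dvd2 : H → H → Prop) x l →
      ∀ b ∈ l, cl b ∈ s ∧ Dvd2 b (cl b) ∧ Dvd2 (cl b) b := by
    intro l hl b hb
    have hbx : Dvd2 b x := hl.1.1.2 ▸ dvd2_prod_of_mem l b hb
    exact hcl_spec b (hatom_letter b hbx (hl.2 b hb))
  -- multiset invariant
  let Φ : List H → (↥s → ℕ) := fun l a => (l.map cl).count ↑a
  -- the comparison lemma
  have K1 : ∀ l m : List H, IsMinAtomicFac (Dvd2 : H → H → Prop) x l →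
      IsMinAtomicFac (Dvd2 : H → H → Prop) x m → Φ l ≤ Φ m →
      WordLe (Dvd2 : H → H → Prop) l m := by
    intro l m hl hm hle
    have hsp : (l.map cl).Subperm (m.map cl) := by
      rw [List.subperm_ext_iff]
      intro v hv
      obtain ⟨b, hb, rfl⟩ := List.mem_map.1 hv
      exact hle ⟨cl b, (hletter l hl b hb).1⟩
    obtain ⟨σ, hσ⟩ := emb_of_subperm hsp
    have h1 : l.length = (l.map cl).length := (List.length_map cl).symm
    have h2 : (m.map cl).length = m.length := List.length_map cl
    refine ⟨((finCongr h1).toEmbedding.trans σ).trans (finCongr h2).toEmbedding, fun i => ?_⟩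
    set j : Fin m.length := (finCongr h2) (σ ((finCongr h1) i)) with hj
    have hclij : cl (m.get j) = cl (l.get i) := by
      have := hσ ((finCongr h1) i)
      simp only [List.get_eq_getElem, List.getElem_map, Fin.coe_cast, finCongr_apply] at this ⊢
      exact this
    have hli := hletter l hl (l.get i) (List.get_mem l i)
    have hmj := hletter m hm (m.get j) (List.get_mem m j)
    constructor
    · exact dvd2_trans hli.2.1 (hclij ▸ hmj.2.2)
    · exact dvd2_trans hmj.2.1 (hclij ▸ hli.2.2)
  -- the set of minimal atomic factorizations and its invariant image
  set Lmin : Set (List H) := {l | IsMinAtomicFac (Dvd2 : H → H → Prop) x l} with hLmin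
  have anti : ∀ u ∈ Φ '' Lmin, ∀ v ∈ Φ '' Lmin, u ≤ v → u = v := by
    rintro u ⟨l, hl, rfl⟩ v ⟨m, hm, rfl⟩ huv
    have h1 : WordLe (Dvd2 : H → H → Prop) l m := K1 l m hl hm huv
    have h2 : WordLe (Dvd2 : H → H → Prop) m l := hm.1.2 l hl.1.1 h1
    have hlen : l.length = m.length :=
      le_antisymm (wordLe_length_le h1) (wordLe_length_le h2)
    by_contra hne
    have hlt : ∃ a : ↥s, Φ l a < Φ m a := by
      by_contra hall
      push_neg at hall
      exact hne (funext fun a => le_antisymm (huv a) (hall a))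
    obtain ⟨a₀, ha₀⟩ := hlt
    have hsum1 : (∑ a ∈ s.attach, Φ l a) < ∑ a ∈ s.attach, Φ m a :=
      Finset.sum_lt_sum (fun a _ => huv a) ⟨a₀, Finset.mem_attach s a₀, ha₀⟩
    have hms : ∀ (w : List H), IsMinAtomicFac (Dvd2 : H → H → Prop) x w →
        (∑ a ∈ s.attach, Φ w a) = w.length := by
      intro w hw
      have hmem : ∀ v ∈ w.map cl, v ∈ s := by
        intro v hv
        obtain ⟨b, hb, rfl⟩ := List.mem_map.1 hv
        exact (hletter w hw b hb).1
      calc (∑ a ∈ s.attach, Φ w a) = ∑ a ∈ s, (w.map cl).count a := by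
            rw [← Finset.sum_attach s fun a => (w.map cl).count a]
        _ = (w.map cl).length := length_eq_sum_count s (w.map cl) hmem
        _ = w.length := List.length_map cl
    rw [hms l hl, hms m hm, hlen] at hsum1
    exact Nat.lt_irrefl _ hsum1
  have hfinS : (Φ '' Lmin).Finite := antichain_finite anti
  -- representatives
  let rep : (↥s → ℕ) → List H := fun u =>
    Classical.epsilon fun l => l ∈ Lmin ∧ Φ l = u
  refine ⟨⟨m₀, hexist⟩, rep '' (Φ '' Lmin), hfinS.image rep, ?_⟩
  intro l hl
  have hu : Φ l ∈ Φ '' Lmin := ⟨l, hl, rfl⟩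
  have hex : ∃ l', l' ∈ Lmin ∧ Φ l' = Φ l := ⟨l, hl, rfl⟩
  have hrep_mem : rep (Φ l) ∈ Lmin ∧ Φ (rep (Φ l)) = Φ l :=
    Classical.epsilon_spec (p := fun l' => l' ∈ Lmin ∧ Φ l' = Φ l) hex
  refine ⟨rep (Φ l), ⟨Φ l, hu, rfl⟩, hrep_mem.1, ?_, ?_⟩
  · exact K1 l (rep (Φ l)) hl hrep_mem.1 (le_of_eq hrep_mem.2.symm)
  · exact K1 (rep (Φ l)) l hrep_mem.1 hl (le_of_eq hrep_mem.2)

end Aux7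


/-- Theorem 5.1. Every Dedekind-finite weakly l.f.g.u. monoid `H` is
factorable (w.r.t. the divisibility preorder `∣_H`). If, moreover, every irreducible of
`(H, ∣_H)` is an ordinary atom of `H` (a non-unit that is not a product of two
non-units), then `H` is FmF-atomic. -/
theorem stmt14 {H : Type*} [Monoid H]
    (hdf : ∀ x y : H, ¬ IsUnit x → ¬ IsUnit y → ¬ IsUnit (x * y))
    (hwlfgu : ∀ x : H, RNonUnit (Dvd2 : H → H → Prop) x →
      IsFGU (SubRel (Dvd2 : H → H → Prop) (GermSub x))) :
    Factorable (Dvd2 : H → H → Prop) ∧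
    ((∀ a : H, RIrred (Dvd2 : H → H → Prop) a →
        ¬ IsUnit a ∧ ∀ y z : H, ¬ IsUnit y → ¬ IsUnit z → a ≠ y * z) →
      IsFmFAtomic (Dvd2 : H → H → Prop)) := by
  exact ⟨factorable_aux hdf hwlfgu, fun hirr => fmf_aux hdf hwlfgu hirr⟩

end FactPaper
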